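/- Let P > 0 and let α, β ∈ (−1,1) with α ≠ β, and set σ = sign(β − α) ∈ {−1, 1}. Then there exists a unique x₀ ∈ (0,1) satisfying P·x₀²·(1 + σβx₀) = (1 − x₀²)·(1 + σαx₀)²; i.e., the fourth-order polynomial P·x²·(1 + σβx) − (1 − x²)·(1 + σαx)² has exactly one root in the open interval (0,1). -/

import Mathlib

open Set

private lemma arma_aux (P a b : ℝ) (hP : 0 < P) (ha : -1 < a) (hab : a < b) (hb1 : b < 1) :
    ∃! x₀ : ℝ, x₀ ∈ Set.Ioo (0 : ℝ) 1 ∧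
      P * x₀ ^ 2 * (1 + b * x₀) = (1 - x₀ ^ 2) * (1 + a * x₀) ^ 2 := by
  have hb : -1 < b := lt_trans ha hab
  -- positivity facts on (0,1)
  have hax : ∀ x ∈ Set.Ioo (0:ℝ) 1, 0 < 1 + a * x := by
    intro x hx; nlinarith [hx.1, hx.2]
  have hbx : ∀ x ∈ Set.Ioo (0:ℝ) 1, 0 < 1 + b * x := by
    intro x hx; nlinarith [hx.1, hx.2]
  have hDpos : ∀ x ∈ Set.Ioo (0:ℝ) 1, 0 < x ^ 2 * (1 + b * x) := by
    intro x hx; have := hbx x hx; have := hx.1; positivity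
  -- the auxiliary function g
  set g : ℝ → ℝ := fun x => (1 - x ^ 2) * (1 + a * x) ^ 2 / (x ^ 2 * (1 + b * x)) with hg
  -- g is strictly antitone on (0,1)
  have hanti : StrictAntiOn g (Set.Ioo (0:ℝ) 1) := by
    apply strictAntiOn_of_deriv_neg (convex_Ioo 0 1)
    · apply ContinuousOn.div
      · fun_prop
      · fun_prop
      · intro x hx; exact ne_of_gt (hDpos x hx)
    · rw [interior_Ioo]
      intro x hx
      have hx0 := hx.1
      have hx1 := hx.2
      have hD := hDpos x hx
      have hax' := hax x hx
      have hbx' := hbx x hx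
      -- derivative computation
      have h1 : HasDerivAt (fun y : ℝ => 1 - y ^ 2) (-(2 * x)) x := by
        simpa using (hasDerivAt_pow 2 x).const_sub 1
      have hlinA : HasDerivAt (fun y : ℝ => 1 + a * y) a x := by
        simpa using ((hasDerivAt_id x).const_mul a).const_add 1
      have h2 : HasDerivAt (fun y : ℝ => (1 + a * y) ^ 2) (2 * (1 + a * x) * a) x := by
        have h2a : HasDerivAt (fun y : ℝ => (1 + a * y) ^ 2) _ x := hlinA.pow 2
        simpa using h2a
      have hN : HasDerivAt (fun y : ℝ => (1 - y ^ 2) * (1 + a * y) ^ 2)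
          (-(2 * x) * (1 + a * x) ^ 2 + (1 - x ^ 2) * (2 * (1 + a * x) * a)) x :=
        h1.mul h2
      have hlinB : HasDerivAt (fun y : ℝ => 1 + b * y) b x := by
        simpa using ((hasDerivAt_id x).const_mul b).const_add 1
      have hD' : HasDerivAt (fun y : ℝ => y ^ 2 * (1 + b * y))
          (2 * x * (1 + b * x) + x ^ 2 * b) x := by
        have : HasDerivAt (fun y : ℝ => y ^ 2 * (1 + b * y)) _ x := (hasDerivAt_pow 2 x).mul hlinB
        simpa using this
      have hgd : HasDerivAt g
          (((-(2 * x) * (1 + a * x) ^ 2 + (1 - x ^ 2) * (2 * (1 + a * x) * a)) *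
              (x ^ 2 * (1 + b * x)) -
            (1 - x ^ 2) * (1 + a * x) ^ 2 * (2 * x * (1 + b * x) + x ^ 2 * b)) /
            (x ^ 2 * (1 + b * x)) ^ 2) x :=
        hN.div hD' (ne_of_gt hD)
      rw [hgd.deriv]
      apply div_neg_of_neg_of_pos _ (by positivity)
      -- key inequality via factorization
      have hfac : (-(2 * x) * (1 + a * x) ^ 2 + (1 - x ^ 2) * (2 * (1 + a * x) * a)) *
            (x ^ 2 * (1 + b * x)) -
          (1 - x ^ 2) * (1 + a * x) ^ 2 * (2 * x * (1 + b * x) + x ^ 2 * b)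
          = x * (1 + a * x) *
            (-((1 + b * x) * (2 + a * x * (1 + x ^ 2))) + x * (1 - x ^ 2) * (a - b)) := by
        ring
      rw [hfac]
      apply mul_neg_of_pos_of_neg (by positivity)
      have h2' : 0 < 2 + a * x * (1 + x ^ 2) := by nlinarith
      nlinarith [mul_pos hbx' h2', mul_pos (mul_pos hx0 (by nlinarith : (0:ℝ) < 1 - x ^ 2))
        (sub_pos.mpr hab)]
  -- existence via IVT
  set f : ℝ → ℝ := fun x => P * x ^ 2 * (1 + b * x) - (1 - x ^ 2) * (1 + a * x) ^ 2 with hf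
  have hcont : ContinuousOn f (Set.Icc (0:ℝ) 1) := by fun_prop
  have hf0 : f 0 = -1 := by simp [hf]
  have hf1 : f 1 = P * (1 + b) := by simp [hf]
  have hmem : (0:ℝ) ∈ Set.Ioo (f 0) (f 1) := by
    rw [hf0, hf1]; constructor
    · norm_num
    · have : 0 < 1 + b := by linarith
      positivity
  obtain ⟨x₀, hx₀, hfx₀⟩ := intermediate_value_Ioo zero_le_one hcont hmem
  refine ⟨x₀, ⟨hx₀, by simp only [hf] at hfx₀; linarith⟩, ?_⟩
  -- uniqueness via strict antitonicity of g
  rintro y ⟨hy, hey⟩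
  have hex : P * x₀ ^ 2 * (1 + b * x₀) = (1 - x₀ ^ 2) * (1 + a * x₀) ^ 2 := by
    simp only [hf] at hfx₀; linarith
  have hgP : ∀ z ∈ Set.Ioo (0:ℝ) 1,
      P * z ^ 2 * (1 + b * z) = (1 - z ^ 2) * (1 + a * z) ^ 2 → g z = P := by
    intro z hz heq
    have hD := hDpos z hz
    rw [hg]
    show (1 - z ^ 2) * (1 + a * z) ^ 2 / (z ^ 2 * (1 + b * z)) = P
    rw [div_eq_iff (ne_of_gt hD)]
    linarith [heq]
  have h1 := hgP y hy hey
  have h2 := hgP x₀ hx₀ hex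
  exact hanti.injOn hy hx₀ (h1.trans h2.symm)

/-- For `P > 0`, `α, β ∈ (−1,1)` with `α ≠ β`, and `σ = sign(β − α)`,
there is exactly one `x₀ ∈ (0,1)` with `P·x₀²·(1 + σβx₀) = (1 − x₀²)·(1 + σαx₀)²`. -/
theorem arma1_unique_root (P α β : ℝ) (hP : 0 < P)
    (hα : α ∈ Set.Ioo (-1 : ℝ) 1) (hβ : β ∈ Set.Ioo (-1 : ℝ) 1) (hαβ : α ≠ β)
    (σ : ℝ) (hσ : σ = Real.sign (β - α)) :
    ∃! x₀ : ℝ, x₀ ∈ Set.Ioo (0 : ℝ) 1 ∧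
      P * x₀ ^ 2 * (1 + σ * β * x₀) = (1 - x₀ ^ 2) * (1 + σ * α * x₀) ^ 2 := by
  have hcases : (σ = 1 ∧ α < β) ∨ (σ = -1 ∧ β < α) := by
    rcases lt_or_gt_of_ne hαβ with h | h
    · left; exact ⟨by rw [hσ, Real.sign_of_pos (by linarith : (0:ℝ) < β - α)], h⟩
    · right; exact ⟨by rw [hσ, Real.sign_of_neg (by linarith : β - α < 0)], h⟩
  have ha1 : -1 < σ * α := by
    rcases hcases with ⟨h, _⟩ | ⟨h, _⟩ <;> rw [h] <;> [linarith [hα.1]; linarith [hα.2]]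
  have hab : σ * α < σ * β := by
    rcases hcases with ⟨h, h'⟩ | ⟨h, h'⟩ <;> rw [h] <;> linarith
  have hb1 : σ * β < 1 := by
    rcases hcases with ⟨h, _⟩ | ⟨h, _⟩ <;> rw [h] <;> [linarith [hβ.2]; linarith [hβ.1]]
  exact arma_aux P (σ * α) (σ * β) hP ha1 hab hb1
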